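/- Let θ ∈ (−π/2, π/2), r₀ > 0, and let γ be the half-line {r·e^{iθ} : r ≥ r₀} ⊂ ℍ. For every R > 0 there exist φ₁ ∈ (−π/2, θ) and φ₂ ∈ (θ, π/2) with d_ℍ(e^{iθ}, e^{iφ₁}) = d_ℍ(e^{iθ}, e^{iφ₂}) = R, such that the hyperbolic R-neighbourhood of γ satisfies {z ∈ ℍ : inf_{w ∈ γ} d_ℍ(z, w) < R} = D_ℍ(r₀·e^{iθ}, R) ∪ {r·e^{iφ} : r > r₀ and φ ∈ (φ₁, φ₂)}, where D_ℍ(w, R) = {z ∈ ℍ : d_ℍ(z, w) < R} is the open hyperbolic disc of centre w and radius R. -/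

import Mathlib

open Complex Filter Topology

/-- Pseudo-hyperbolic distance on the right half-plane ℍ = {Re z > 0}. -/
noncomputable def rhoH (z w : ℂ) : ℝ := ‖(z - w) / (z + (starRingEnd ℂ) w)‖

/-- Hyperbolic distance on the right half-plane. -/
noncomputable def dH (z w : ℂ) : ℝ := (1/2) * Real.log ((1 + rhoH z w) / (1 - rhoH z w))

/-- `p` is a hyperbolic projection of `z` onto the curve `γ : [0,∞) → ℍ`. -/
def IsProjH (γ : ℝ → ℂ) (z p : ℂ) : Prop :=
  (∃ t ≥ (0:ℝ), p = γ t) ∧ ∀ t ≥ (0:ℝ), dH z p ≤ dH z (γ t)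

/-- `f` is a hyperbolic holomorphic self-map of the right half-plane with
Denjoy–Wolff point ∞: it preserves ℍ, is holomorphic on ℍ, its iterates tend to ∞
uniformly on compact subsets of ℍ, and `f(z)/z → c` for some `c > 1` as `z → ∞`
within every sector `{|arg z| < φ}`, `φ ∈ (0, π/2)`. -/
def HyperbolicAtInf (f : ℂ → ℂ) : Prop :=
  (∀ z : ℂ, 0 < z.re → 0 < (f z).re) ∧
  DifferentiableOn ℂ f {z : ℂ | 0 < z.re} ∧
  (∀ K : Set ℂ, K ⊆ {z : ℂ | 0 < z.re} → IsCompact K →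
    ∀ M : ℝ, ∃ N : ℕ, ∀ n ≥ N, ∀ z ∈ K, M < ‖f^[n] z‖) ∧
  (∃ c : ℝ, 1 < c ∧ ∀ φ ∈ Set.Ioo (0:ℝ) (Real.pi/2), ∀ ε > (0:ℝ), ∃ R : ℝ,
    ∀ z : ℂ, 0 < z.re → |z.arg| < φ → R < ‖z‖ →
      ‖f z / z - (c:ℂ)‖ < ε)

/-! ### Auxiliary lemmas -/

lemma polar_re (r φ : ℝ) : ((r:ℂ) * Complex.exp ((φ:ℂ)*I)).re = r * Real.cos φ := by
  rw [Complex.mul_re]; simp [Complex.exp_ofReal_mul_I_re, Complex.exp_ofReal_mul_I_im]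

lemma polar_im (r φ : ℝ) : ((r:ℂ) * Complex.exp ((φ:ℂ)*I)).im = r * Real.sin φ := by
  rw [Complex.mul_im]; simp [Complex.exp_ofReal_mul_I_re, Complex.exp_ofReal_mul_I_im]

lemma normSq_sub_polar (r s φ θ : ℝ) :
    Complex.normSq ((r:ℂ) * Complex.exp ((φ:ℂ)*I) - (s:ℂ)*Complex.exp ((θ:ℂ)*I))
      = r^2+s^2-2*r*s*Real.cos (φ-θ) := by
  rw [Complex.normSq_apply, Complex.sub_re, Complex.sub_im, polar_re, polar_im, polar_re,
    polar_im, Real.cos_sub]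
  nlinarith [Real.sin_sq_add_cos_sq φ, Real.sin_sq_add_cos_sq θ]

lemma normSq_add_conj_polar (r s φ θ : ℝ) :
    Complex.normSq ((r:ℂ) * Complex.exp ((φ:ℂ)*I) + (starRingEnd ℂ) ((s:ℂ)*Complex.exp ((θ:ℂ)*I)))
      = r^2+s^2+2*r*s*Real.cos (φ+θ) := by
  rw [Complex.normSq_apply, Complex.add_re, Complex.add_im, Complex.conj_re, Complex.conj_im,
    polar_re, polar_im, polar_re, polar_im, Real.cos_add]
  nlinarith [Real.sin_sq_add_cos_sq φ, Real.sin_sq_add_cos_sq θ]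

lemma rhoH_nonneg (z w : ℂ) : 0 ≤ rhoH z w := norm_nonneg _

lemma rhoH_sq (z w : ℂ) :
    rhoH z w ^ 2 = Complex.normSq (z - w) / Complex.normSq (z + (starRingEnd ℂ) w) := by
  rw [rhoH, Complex.sq_norm, map_div₀]

lemma rhoH_sq_polar (r s φ θ : ℝ) :
    rhoH ((r:ℂ) * Complex.exp ((φ:ℂ)*I)) ((s:ℂ) * Complex.exp ((θ:ℂ)*I)) ^ 2
      = (r^2+s^2-2*r*s*Real.cos (φ-θ)) / (r^2+s^2+2*r*s*Real.cos (φ+θ)) := by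
  rw [rhoH_sq, normSq_sub_polar, normSq_add_conj_polar]

lemma rhoH_lt_one {z w : ℂ} (hz : 0 < z.re) (hw : 0 < w.re) : rhoH z w < 1 := by
  have hne : z + (starRingEnd ℂ) w ≠ 0 := by
    intro h
    have h2 : (z + (starRingEnd ℂ) w).re = z.re + w.re := by
      simp [Complex.add_re, Complex.conj_re]
    rw [h] at h2; simp at h2; linarith
  have hpos : 0 < ‖z + (starRingEnd ℂ) w‖ := norm_pos_iff.mpr hne
  rw [rhoH, norm_div, div_lt_one hpos]
  have key : Complex.normSq (z - w) < Complex.normSq (z + (starRingEnd ℂ) w) := by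
    simp only [Complex.normSq_apply, Complex.sub_re, Complex.sub_im, Complex.add_re,
      Complex.add_im, Complex.conj_re, Complex.conj_im]
    nlinarith
  rw [← sq_lt_sq₀ (norm_nonneg _) (norm_nonneg _), Complex.sq_norm, Complex.sq_norm]
  exact key

lemma tanh_formula (x : ℝ) :
    Real.tanh x = (Real.exp (2*x) - 1)/(Real.exp (2*x) + 1) := by
  rw [Real.tanh_eq_sinh_div_cosh, Real.sinh_eq, Real.cosh_eq,
    show 2*x = x + x by ring, Real.exp_add]
  have h1 : Real.exp x ≠ 0 := Real.exp_ne_zero x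
  have h4 : Real.exp (-x) = (Real.exp x)⁻¹ := Real.exp_neg x
  have h3 : Real.exp x * Real.exp x + 1 ≠ 0 := by positivity
  rw [h4]; field_simp

lemma tanh_pos_lt_one {R : ℝ} (hR : 0 < R) : 0 < Real.tanh R ∧ Real.tanh R < 1 := by
  rw [tanh_formula]
  have hE : 1 < Real.exp (2*R) := by
    rw [← Real.exp_zero]; exact Real.exp_lt_exp.2 (by linarith)
  constructor
  · apply div_pos <;> linarith
  · rw [div_lt_one (by linarith)]; linarith

lemma dH_lt_iff {z w : ℂ} (hz : 0 < z.re) (hw : 0 < w.re) {R : ℝ} (hR : 0 < R) :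
    dH z w < R ↔ rhoH z w < Real.tanh R := by
  have h0 := rhoH_nonneg z w
  have h1 := rhoH_lt_one hz hw
  set ρ := rhoH z w with hρ
  have hE : 1 < Real.exp (2*R) := by
    rw [← Real.exp_zero]; exact Real.exp_lt_exp.2 (by linarith)
  have hu : 0 < (1 + ρ)/(1 - ρ) := div_pos (by linarith) (by linarith)
  rw [dH, tanh_formula]
  rw [show ((1/2 : ℝ) * Real.log ((1+ρ)/(1-ρ)) < R ↔ Real.log ((1+ρ)/(1-ρ)) < 2*R) from
    ⟨fun h => by linarith, fun h => by linarith⟩]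
  rw [Real.log_lt_iff_lt_exp hu, div_lt_iff₀ (by linarith : (0:ℝ) < 1 - ρ),
    lt_div_iff₀ (by linarith : (0:ℝ) < Real.exp (2*R) + 1)]
  constructor <;> intro h <;> nlinarith

lemma dH_eq_of_rho {z w : ℂ} {R : ℝ} (hR : 0 < R) (h : rhoH z w = Real.tanh R) :
    dH z w = R := by
  rw [dH, h, tanh_formula]
  have hE : 1 < Real.exp (2*R) := by
    rw [← Real.exp_zero]; exact Real.exp_lt_exp.2 (by linarith)
  have key : (1 + (Real.exp (2*R) - 1)/(Real.exp (2*R) + 1)) /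
      (1 - (Real.exp (2*R) - 1)/(Real.exp (2*R) + 1)) = Real.exp (2*R) := by
    rw [div_eq_iff]
    · field_simp; ring
    · intro hc
      have h5 : (1:ℝ) - (Real.exp (2*R) - 1)/(Real.exp (2*R) + 1) = 2/(Real.exp (2*R)+1) := by
        field_simp; norm_num
      rw [h5] at hc
      have : (0:ℝ) < 2/(Real.exp (2*R)+1) := by positivity
      linarith
  rw [key, Real.log_exp]; ring

/-! ### The function `hfun` and its monotonicity -/

noncomputable def hfun (θ φ : ℝ) : ℝ := (1 - Real.cos (φ - θ)) / (1 + Real.cos (φ + θ))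

lemma one_add_cos_pos {x : ℝ} (hx : |x| < Real.pi) : 0 < 1 + Real.cos x := by
  have h2 : Real.cos (x/2)^2 = 1/2 + Real.cos x / 2 := by
    have := Real.cos_sq (x/2); rwa [show 2*(x/2) = x by ring] at this
  have hx' := abs_lt.1 hx
  have hc : 0 < Real.cos (x/2) := Real.cos_pos_of_mem_Ioo ⟨by linarith, by linarith⟩
  nlinarith

lemma hfun_hasDeriv {θ x : ℝ} (hne : 1 + Real.cos (x + θ) ≠ 0) :
    HasDerivAt (hfun θ)
      (2 * Real.cos θ * (Real.sin x - Real.sin θ) / (1 + Real.cos (x + θ))^2) x := by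
  have h1 : HasDerivAt (fun φ : ℝ => 1 - Real.cos (φ - θ)) (Real.sin (x - θ)) x := by
    have ha : HasDerivAt (fun φ : ℝ => φ - θ) 1 x := (hasDerivAt_id x).sub_const θ
    have hb := (Real.hasDerivAt_cos (x - θ)).comp x ha
    simpa using (hb.const_sub 1)
  have h2 : HasDerivAt (fun φ : ℝ => 1 + Real.cos (φ + θ)) (-Real.sin (x + θ)) x := by
    have ha : HasDerivAt (fun φ : ℝ => φ + θ) 1 x := (hasDerivAt_id x).add_const θ
    have hb := (Real.hasDerivAt_cos (x + θ)).comp x ha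
    simpa using (hb.const_add 1)
  have := h1.div h2 hne
  refine this.congr_deriv ?_; symm
  congr 1
  rw [Real.sin_sub, Real.sin_add, Real.cos_sub, Real.cos_add]
  linear_combination (2*Real.sin θ*Real.cos θ) * Real.sin_sq_add_cos_sq x

lemma abs_add_lt_pi {θ x : ℝ} (hθ : θ ∈ Set.Ioo (-(Real.pi/2)) (Real.pi/2))
    (hx : x ∈ Set.Icc (-(Real.pi/2)) (Real.pi/2)) : |x + θ| < Real.pi := by
  obtain ⟨h1, h2⟩ := hθ; obtain ⟨h3, h4⟩ := hx
  rw [abs_lt]; constructor <;> linarith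

lemma hfun_contOn {θ : ℝ} (hθ : θ ∈ Set.Ioo (-(Real.pi/2)) (Real.pi/2)) :
    ContinuousOn (hfun θ) (Set.Icc (-(Real.pi/2)) (Real.pi/2)) := by
  apply ContinuousOn.div
  · fun_prop
  · fun_prop
  · intro x hx
    exact ne_of_gt (one_add_cos_pos (abs_add_lt_pi hθ hx))

lemma hfun_mono {θ : ℝ} (hθ : θ ∈ Set.Ioo (-(Real.pi/2)) (Real.pi/2)) :
    StrictMonoOn (hfun θ) (Set.Icc θ (Real.pi/2)) := by
  have hsub : Set.Icc θ (Real.pi/2) ⊆ Set.Icc (-(Real.pi/2)) (Real.pi/2) :=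
    Set.Icc_subset_Icc (le_of_lt hθ.1) le_rfl
  apply strictMonoOn_of_deriv_pos (convex_Icc _ _) ((hfun_contOn hθ).mono hsub)
  intro x hx
  rw [interior_Icc] at hx
  have hxm : x ∈ Set.Icc (-(Real.pi/2)) (Real.pi/2) :=
    ⟨le_of_lt (lt_of_le_of_lt hθ.1.le hx.1), hx.2.le⟩
  have hne : 1 + Real.cos (x + θ) ≠ 0 := ne_of_gt (one_add_cos_pos (abs_add_lt_pi hθ hxm))
  rw [(hfun_hasDeriv hne).deriv]
  apply div_pos
  · have hcθ : 0 < Real.cos θ := Real.cos_pos_of_mem_Ioo hθ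
    have hs : Real.sin θ < Real.sin x :=
      Real.strictMonoOn_sin ⟨hθ.1.le, hθ.2.le⟩ ⟨hxm.1, hxm.2⟩ hx.1
    nlinarith
  · have := one_add_cos_pos (abs_add_lt_pi hθ hxm)
    positivity

lemma hfun_anti {θ : ℝ} (hθ : θ ∈ Set.Ioo (-(Real.pi/2)) (Real.pi/2)) :
    StrictAntiOn (hfun θ) (Set.Icc (-(Real.pi/2)) θ) := by
  have hsub : Set.Icc (-(Real.pi/2)) θ ⊆ Set.Icc (-(Real.pi/2)) (Real.pi/2) :=
    Set.Icc_subset_Icc le_rfl (le_of_lt hθ.2)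
  apply strictAntiOn_of_deriv_neg (convex_Icc _ _) ((hfun_contOn hθ).mono hsub)
  intro x hx
  rw [interior_Icc] at hx
  have hxm : x ∈ Set.Icc (-(Real.pi/2)) (Real.pi/2) :=
    ⟨hx.1.le, le_of_lt (lt_of_lt_of_le hx.2 hθ.2.le)⟩
  have hne : 1 + Real.cos (x + θ) ≠ 0 := ne_of_gt (one_add_cos_pos (abs_add_lt_pi hθ hxm))
  rw [(hfun_hasDeriv hne).deriv]
  apply div_neg_of_neg_of_pos
  · have hcθ : 0 < Real.cos θ := Real.cos_pos_of_mem_Ioo hθ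
    have hs : Real.sin x < Real.sin θ :=
      Real.strictMonoOn_sin ⟨hxm.1, hxm.2⟩ ⟨hθ.1.le, hθ.2.le⟩ hx.2
    nlinarith
  · have := one_add_cos_pos (abs_add_lt_pi hθ hxm)
    positivity

lemma hfun_self (θ : ℝ) : hfun θ θ = 0 := by simp [hfun]

lemma sin_lt_one' {θ : ℝ} (hθ : θ ∈ Set.Ioo (-(Real.pi/2)) (Real.pi/2)) :
    Real.sin θ < 1 := by
  have := Real.strictMonoOn_sin (Set.mem_Icc.2 ⟨hθ.1.le, hθ.2.le⟩)
    (Set.mem_Icc.2 ⟨by linarith [Real.pi_pos], le_rfl⟩) hθ.2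
  simpa using this

lemma neg_one_lt_sin' {θ : ℝ} (hθ : θ ∈ Set.Ioo (-(Real.pi/2)) (Real.pi/2)) :
    -1 < Real.sin θ := by
  have := Real.strictMonoOn_sin (Set.mem_Icc.2 ⟨le_rfl, by linarith [Real.pi_pos]⟩)
    (Set.mem_Icc.2 ⟨hθ.1.le, hθ.2.le⟩) hθ.1
  simpa using this

lemma hfun_top {θ : ℝ} (hθ : θ ∈ Set.Ioo (-(Real.pi/2)) (Real.pi/2)) :
    hfun θ (Real.pi/2) = 1 := by
  have h1 : Real.cos (Real.pi/2 - θ) = Real.sin θ := Real.cos_pi_div_two_sub θ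
  have h2 : Real.cos (Real.pi/2 + θ) = -Real.sin θ := by
    rw [Real.cos_add]; simp
  rw [hfun, h1, h2]
  have := sin_lt_one' hθ
  rw [div_eq_one_iff_eq (by linarith : 1 + -Real.sin θ ≠ 0)]
  ring

lemma hfun_bot {θ : ℝ} (hθ : θ ∈ Set.Ioo (-(Real.pi/2)) (Real.pi/2)) :
    hfun θ (-(Real.pi/2)) = 1 := by
  have h1 : Real.cos (-(Real.pi/2) - θ) = -Real.sin θ := by
    rw [show -(Real.pi/2) - θ = -(Real.pi/2 + θ) by ring, Real.cos_neg, Real.cos_add]; simp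
  have h2 : Real.cos (-(Real.pi/2) + θ) = Real.sin θ := by
    rw [show -(Real.pi/2) + θ = -(Real.pi/2 - θ) by ring, Real.cos_neg, Real.cos_pi_div_two_sub]
  rw [hfun, h1, h2]
  have := neg_one_lt_sin' hθ
  rw [div_eq_one_iff_eq (by linarith : 1 + Real.sin θ ≠ 0)]
  ring

lemma rhoH_sq_unit (θ φ : ℝ) :
    rhoH (Complex.exp ((θ:ℂ)*I)) (Complex.exp ((φ:ℂ)*I)) ^ 2 = hfun θ φ := by
  have h := rhoH_sq_polar 1 1 θ φ
  simp only [Complex.ofReal_one, one_mul] at h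
  rw [h, hfun, show θ-φ = -(φ-θ) by ring, Real.cos_neg, add_comm θ φ,
    show (1:ℝ)^2+1^2-2*1*1*Real.cos (φ-θ) = 2*(1-Real.cos (φ-θ)) by ring,
    show (1:ℝ)^2+1^2+2*1*1*Real.cos (φ+θ) = 2*(1+Real.cos (φ+θ)) by ring,
    mul_div_mul_left _ _ (two_ne_zero)]

lemma Q_rr (r a b : ℝ) (hr : 0 < r) :
    (r^2+r^2-2*r*r*a)/(r^2+r^2+2*r*r*b) = (1-a)/(1+b) := by
  rw [show r^2+r^2-2*r*r*a = (2*r^2)*(1-a) by ring,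
    show r^2+r^2+2*r*r*b = (2*r^2)*(1+b) by ring,
    mul_div_mul_left _ _ (by positivity : (2:ℝ)*r^2 ≠ 0)]

lemma Q_denom_pos {r s φθ : ℝ} (hr : 0 < r) (hs : 0 < s) (h : |φθ| < Real.pi) :
    0 < r^2+s^2+2*r*s*Real.cos φθ := by
  have h1 := one_add_cos_pos h
  nlinarith [sq_nonneg (r-s), mul_pos (mul_pos hr hs) h1]

lemma Q_compare {r s₁ s₂ a b : ℝ} (hr : 0 < r) (hab : 0 < a + b)
    (hd₁ : 0 < r^2+s₁^2+2*r*s₁*b) (hd₂ : 0 < r^2+s₂^2+2*r*s₂*b)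
    (hsign : (s₂ - s₁)*(r^2 - s₁*s₂) ≤ 0) :
    (r^2+s₁^2-2*r*s₁*a)/(r^2+s₁^2+2*r*s₁*b) ≤ (r^2+s₂^2-2*r*s₂*a)/(r^2+s₂^2+2*r*s₂*b) := by
  rw [div_le_div_iff₀ hd₁ hd₂]
  have key : 2*r*(a+b)*((s₂-s₁)*(r^2-s₁*s₂)) ≤ 0 :=
    mul_nonpos_of_nonneg_of_nonpos (by positivity) hsign
  nlinarith [key]

/-- the hyperbolic R-neighbourhood of the half-line
{re^{iθ} : r ≥ r₀} is the union of the hyperbolic disc D_ℍ(r₀e^{iθ}, R) and the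
sector {re^{iφ} : r > r₀, φ ∈ (φ₁, φ₂)}, where d_ℍ(e^{iθ}, e^{iφⱼ}) = R.
(Note: inf_{w∈γ} d_ℍ(z,w) < R is expressed as ∃ r ≥ r₀, d_ℍ(z, re^{iθ}) < R.) -/
theorem stmt15 (θ : ℝ) (hθ : θ ∈ Set.Ioo (-(Real.pi/2)) (Real.pi/2))
    (r₀ : ℝ) (hr₀ : 0 < r₀) (R : ℝ) (hR : 0 < R) :
    ∃ φ₁ ∈ Set.Ioo (-(Real.pi/2)) θ, ∃ φ₂ ∈ Set.Ioo θ (Real.pi/2),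
      dH (Complex.exp ((θ : ℂ) * I)) (Complex.exp ((φ₁ : ℂ) * I)) = R ∧
      dH (Complex.exp ((θ : ℂ) * I)) (Complex.exp ((φ₂ : ℂ) * I)) = R ∧
      {z : ℂ | 0 < z.re ∧ ∃ r ≥ r₀, dH z ((r : ℂ) * Complex.exp ((θ : ℂ) * I)) < R} =
        {z : ℂ | 0 < z.re ∧ dH z ((r₀ : ℂ) * Complex.exp ((θ : ℂ) * I)) < R} ∪
        {z : ℂ | ∃ r > r₀, ∃ φ ∈ Set.Ioo φ₁ φ₂, z = (r : ℂ) * Complex.exp ((φ : ℂ) * I)} := by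
  obtain ⟨hT0, hT1⟩ := tanh_pos_lt_one hR
  set T := Real.tanh R with hT
  have hT2 : T^2 ∈ Set.Ioo (0:ℝ) 1 := ⟨by positivity, by nlinarith⟩
  have hcθ : 0 < Real.cos θ := Real.cos_pos_of_mem_Ioo hθ
  -- existence of φ₂
  have hivt2 : T^2 ∈ hfun θ '' Set.Ioo θ (Real.pi/2) := by
    apply intermediate_value_Ioo (le_of_lt hθ.2)
      ((hfun_contOn hθ).mono (Set.Icc_subset_Icc (le_of_lt hθ.1) le_rfl))
    rw [hfun_self, hfun_top hθ]
    exact hT2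
  obtain ⟨φ₂, hφ₂mem, hφ₂⟩ := hivt2
  -- existence of φ₁
  have hivt1 : T^2 ∈ hfun θ '' Set.Ioo (-(Real.pi/2)) θ := by
    apply intermediate_value_Ioo' (le_of_lt hθ.1)
      ((hfun_contOn hθ).mono (Set.Icc_subset_Icc le_rfl (le_of_lt hθ.2)))
    rw [hfun_self, hfun_bot hθ]
    exact hT2
  obtain ⟨φ₁, hφ₁mem, hφ₁⟩ := hivt1
  refine ⟨φ₁, hφ₁mem, φ₂, hφ₂mem, ?_, ?_, ?_⟩
  · apply dH_eq_of_rho hR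
    have h0 := rhoH_nonneg (Complex.exp ((θ:ℂ)*I)) (Complex.exp ((φ₁:ℂ)*I))
    have hsq : rhoH (Complex.exp ((θ:ℂ)*I)) (Complex.exp ((φ₁:ℂ)*I)) ^2 = T^2 := by
      rw [rhoH_sq_unit, hφ₁]
    calc rhoH (Complex.exp ((θ:ℂ)*I)) (Complex.exp ((φ₁:ℂ)*I))
        = Real.sqrt (rhoH (Complex.exp ((θ:ℂ)*I)) (Complex.exp ((φ₁:ℂ)*I)) ^2) :=
          (Real.sqrt_sq h0).symm
      _ = Real.sqrt (T^2) := by rw [hsq]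
      _ = T := Real.sqrt_sq hT0.le
  · apply dH_eq_of_rho hR
    have h0 := rhoH_nonneg (Complex.exp ((θ:ℂ)*I)) (Complex.exp ((φ₂:ℂ)*I))
    have hsq : rhoH (Complex.exp ((θ:ℂ)*I)) (Complex.exp ((φ₂:ℂ)*I)) ^2 = T^2 := by
      rw [rhoH_sq_unit, hφ₂]
    calc rhoH (Complex.exp ((θ:ℂ)*I)) (Complex.exp ((φ₂:ℂ)*I))
        = Real.sqrt (rhoH (Complex.exp ((θ:ℂ)*I)) (Complex.exp ((φ₂:ℂ)*I)) ^2) :=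
          (Real.sqrt_sq h0).symm
      _ = Real.sqrt (T^2) := by rw [hsq]
      _ = T := Real.sqrt_sq hT0.le
  -- characterization of the sub-level set of hfun
  have hchar : ∀ φ, φ ∈ Set.Icc (-(Real.pi/2)) (Real.pi/2) →
      (hfun θ φ < T^2 ↔ φ ∈ Set.Ioo φ₁ φ₂) := by
    intro φ hφ
    constructor
    · intro hlt
      constructor
      · rcases le_or_gt θ φ with hc | hc
        · exact lt_of_lt_of_le hφ₁mem.2 hc
        · by_contra hle
          push_neg at hle
          rcases lt_or_eq_of_le hle with h' | h'
          · have := hfun_anti hθ ⟨hφ.1, hc.le⟩ ⟨hφ₁mem.1.le, hφ₁mem.2.le⟩ h'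
            rw [hφ₁] at this; linarith
          · rw [h', hφ₁] at hlt; linarith
      · rcases le_or_gt θ φ with hc | hc
        · by_contra hle
          push_neg at hle
          rcases lt_or_eq_of_le hle with h' | h'
          · have := hfun_mono hθ ⟨hφ₂mem.1.le, hφ₂mem.2.le⟩ ⟨hc, hφ.2⟩ h'
            rw [hφ₂] at this; linarith
          · rw [← h', hφ₂] at hlt; linarith
        · exact lt_of_lt_of_le hc (le_of_lt hφ₂mem.1)
    · intro hmem
      rcases le_or_gt θ φ with hc | hc
      · have := hfun_mono hθ ⟨hc, hφ.2⟩ ⟨hφ₂mem.1.le, hφ₂mem.2.le⟩ hmem.2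
        rw [hφ₂] at this; exact this
      · have := hfun_anti hθ ⟨hφ₁mem.1.le, hφ₁mem.2.le⟩ ⟨hφ.1, hc.le⟩ hmem.1
        rw [hφ₁] at this; exact this
  -- the set equality
  ext z
  simp only [Set.mem_setOf_eq, Set.mem_union]
  constructor
  · rintro ⟨hzre, s, hs, hd⟩
    have hs0 : 0 < s := lt_of_lt_of_le hr₀ hs
    have hz0 : z ≠ 0 := fun h => by rw [h] at hzre; simp at hzre
    set r := ‖z‖ with hr
    set φ := Complex.arg z with hφdef
    have hr0 : 0 < r := norm_pos_iff.mpr hz0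
    have hφlt : |φ| < Real.pi/2 := Complex.abs_arg_lt_pi_div_two_iff.2 (Or.inl hzre)
    have hφIoo : φ ∈ Set.Ioo (-(Real.pi/2)) (Real.pi/2) := by
      have := abs_lt.1 hφlt; exact ⟨this.1, this.2⟩
    have hzpolar : z = (r:ℂ) * Complex.exp ((φ:ℂ)*I) := (Complex.norm_mul_exp_arg_mul_I z).symm
    have hab : 0 < Real.cos (φ-θ) + Real.cos (φ+θ) := by
      rw [Real.cos_sub, Real.cos_add]
      have := Real.cos_pos_of_mem_Ioo hφIoo
      nlinarith
    have habs : ∀ t : ℝ, 0 < t → |φ + θ| < Real.pi := by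
      intro _ _
      exact abs_add_lt_pi hθ ⟨hφIoo.1.le, hφIoo.2.le⟩
    have hsum : |φ + θ| < Real.pi := abs_add_lt_pi hθ ⟨hφIoo.1.le, hφIoo.2.le⟩
    have hrhosq : ∀ t : ℝ, rhoH z ((t:ℂ) * Complex.exp ((θ:ℂ)*I)) ^ 2
        = (r^2+t^2-2*r*t*Real.cos (φ-θ)) / (r^2+t^2+2*r*t*Real.cos (φ+θ)) := by
      intro t
      conv_lhs => rw [hzpolar]
      exact rhoH_sq_polar r t φ θ
    have hiff : ∀ t : ℝ, 0 < t → (dH z ((t:ℂ) * Complex.exp ((θ:ℂ)*I)) < R ↔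
        (r^2+t^2-2*r*t*Real.cos (φ-θ)) / (r^2+t^2+2*r*t*Real.cos (φ+θ)) < T^2) := by
      intro t ht
      have hwre : 0 < ((t:ℂ) * Complex.exp ((θ:ℂ)*I)).re := by
        rw [polar_re]; exact mul_pos ht hcθ
      rw [dH_lt_iff hzre hwre hR, ← hT]
      constructor
      · intro h
        rw [← hrhosq t]
        exact pow_lt_pow_left₀ h (rhoH_nonneg _ _) (by norm_num)
      · intro h
        rw [← hrhosq t] at h
        exact lt_of_pow_lt_pow_left₀ 2 hT0.le h
    have hQs : (r^2+s^2-2*r*s*Real.cos (φ-θ)) / (r^2+s^2+2*r*s*Real.cos (φ+θ)) < T^2 :=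
      (hiff s hs0).1 hd
    rcases le_or_gt r r₀ with hcase | hcase
    · left
      refine ⟨hzre, (hiff r₀ hr₀).2 ?_⟩
      refine lt_of_le_of_lt (Q_compare hr0 hab (Q_denom_pos hr0 hr₀ hsum)
        (Q_denom_pos hr0 hs0 hsum) ?_) hQs
      have h1 : 0 ≤ s - r₀ := by linarith
      have h2 : r^2 - r₀*s ≤ 0 := by nlinarith
      exact mul_nonpos_of_nonneg_of_nonpos h1 h2
    · right
      have hQr : (r^2+r^2-2*r*r*Real.cos (φ-θ)) / (r^2+r^2+2*r*r*Real.cos (φ+θ)) < T^2 := by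
        refine lt_of_le_of_lt (Q_compare hr0 hab (Q_denom_pos hr0 hr0 hsum)
          (Q_denom_pos hr0 hs0 hsum) ?_) hQs
        nlinarith [mul_nonneg hr0.le (sq_nonneg (s-r))]
      rw [Q_rr _ _ _ hr0] at hQr
      have hφmem : φ ∈ Set.Ioo φ₁ φ₂ := (hchar φ ⟨hφIoo.1.le, hφIoo.2.le⟩).1 hQr
      exact ⟨r, hcase, φ, hφmem, hzpolar⟩
  · rintro (⟨hzre, hd⟩ | ⟨r, hrr, φ, hφmem, hzeq⟩)
    · exact ⟨hzre, r₀, le_rfl, hd⟩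
    · have hr0 : 0 < r := lt_trans hr₀ hrr
      have hφIoo : φ ∈ Set.Ioo (-(Real.pi/2)) (Real.pi/2) :=
        ⟨lt_trans hφ₁mem.1 hφmem.1, lt_trans hφmem.2 hφ₂mem.2⟩
      have hcφ : 0 < Real.cos φ := Real.cos_pos_of_mem_Ioo hφIoo
      have hzre : 0 < z.re := by rw [hzeq, polar_re]; exact mul_pos hr0 hcφ
      refine ⟨hzre, r, le_of_lt hrr, ?_⟩
      have hwre : 0 < ((r:ℂ) * Complex.exp ((θ:ℂ)*I)).re := by
        rw [polar_re]; exact mul_pos hr0 hcθ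
      rw [dH_lt_iff hzre hwre hR, ← hT]
      have hhf : hfun θ φ < T^2 := (hchar φ ⟨hφIoo.1.le, hφIoo.2.le⟩).2 hφmem
      have hsq : rhoH z ((r:ℂ) * Complex.exp ((θ:ℂ)*I)) ^ 2 = hfun θ φ := by
        conv_lhs => rw [hzeq]
        rw [rhoH_sq_polar, Q_rr _ _ _ hr0, hfun]
      have : rhoH z ((r:ℂ) * Complex.exp ((θ:ℂ)*I)) ^ 2 < T^2 := by rw [hsq]; exact hhf
      exact lt_of_pow_lt_pow_left₀ 2 hT0.le this
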